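/- Let ℒ ⊂ ℝ^d be a lattice of rank n and let ℒ' ⊆ ℒ be a primitive sublattice of rank ℓ. Then the duality map (ℒ, ℒ') ↦ (ℒ*, ℒ* ∩ (ℒ')^⊥) is an involution on (lattice, primitive-sublattice) pairs that preserves γ; that is, ℒ ∩ (ℒ* ∩ (ℒ')^⊥)^⊥ = ℒ' and γ(ℒ*, ℒ* ∩ (ℒ')^⊥) = γ(ℒ, ℒ'), where γ(ℒ, ℒ') := det(ℒ')/det(ℒ)^{ℓ/n}. -/

import Mathlib

open scoped RealInnerProductSpace BigOperators

noncomputable section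

/-- The set of integer linear combinations of `B 0, …, B (n-1)`. -/
def zspan {d n : ℕ} (B : Fin n → EuclideanSpace ℝ (Fin d)) : Set (EuclideanSpace ℝ (Fin d)) :=
  {x | ∃ c : Fin n → ℤ, x = ∑ i, (c i : ℝ) • B i}

/-- `L` is a lattice of rank `n`: the ℤ-span of `n` ℝ-linearly independent vectors. -/
def IsLattice {d : ℕ} (L : Set (EuclideanSpace ℝ (Fin d))) (n : ℕ) : Prop :=
  ∃ B : Fin n → EuclideanSpace ℝ (Fin d), LinearIndependent ℝ B ∧ L = zspan B

/-- The dual set `S* := {w ∈ span_ℝ S : ⟨w,y⟩ ∈ ℤ for all y ∈ S}`. -/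
def dualSet {d : ℕ} (S : Set (EuclideanSpace ℝ (Fin d))) : Set (EuclideanSpace ℝ (Fin d)) :=
  {w | w ∈ Submodule.span ℝ S ∧ ∀ y ∈ S, ∃ m : ℤ, ⟪w, y⟫ = (m : ℝ)}

/-- Orthogonal projection onto the orthogonal complement of `span_ℝ S`. -/
def projPerp {d : ℕ} (S : Set (EuclideanSpace ℝ (Fin d))) (x : EuclideanSpace ℝ (Fin d)) : EuclideanSpace ℝ (Fin d) :=
  (Submodule.orthogonalProjectionOnto (Submodule.span ℝ S)ᗮ x : EuclideanSpace ℝ (Fin d))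

/-- `det(ℒ) = √(det(BᵀB))`, computed from a basis `B` via its Gram matrix. -/
def gramDet {d n : ℕ} (B : Fin n → EuclideanSpace ℝ (Fin d)) : ℝ :=
  Real.sqrt (Matrix.det (Matrix.of fun i j => ⟪B i, B j⟫))

/-- The Gram–Schmidt orthogonalization `b̃ᵢ = Π_{{b₁,…,b_(i-1)}^⊥}(bᵢ)`. -/
def gsVec {d n : ℕ} (B : Fin n → EuclideanSpace ℝ (Fin d)) (i : Fin n) : EuclideanSpace ℝ (Fin d) :=
  projPerp (B '' {j | j < i}) (B i)

/-- The Gram–Schmidt coefficients `μ_(i,j) = ⟨b̃ᵢ, bⱼ⟩ / ‖b̃ᵢ‖²`. -/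
def mu {d n : ℕ} (B : Fin n → EuclideanSpace ℝ (Fin d)) (i j : Fin n) : ℝ :=
  ⟪gsVec B i, B j⟫ / ‖gsVec B i‖ ^ 2

/-- `B` is an LLL-reduced basis (with parameter δ = 3/4). -/
def IsLLLReduced {d n : ℕ} (B : Fin n → EuclideanSpace ℝ (Fin d)) : Prop :=
  LinearIndependent ℝ B ∧
  (∀ i j : Fin n, i < j → |mu B i j| ≤ 1 / 2) ∧
  (∀ (i : ℕ) (h : i + 1 < n),
    (3 / 4) * ‖gsVec B ⟨i, Nat.lt_of_succ_lt h⟩‖ ^ 2 ≤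
      ‖gsVec B ⟨i + 1, h⟩‖ ^ 2 +
        (mu B ⟨i, Nat.lt_of_succ_lt h⟩ ⟨i + 1, h⟩) ^ 2 * ‖gsVec B ⟨i, Nat.lt_of_succ_lt h⟩‖ ^ 2)

open Submodule Set Matrix

section Stmt3Aux
variable {d : ℕ}

lemma coe_spanZ {ι : Type*} [Fintype ι] (B : ι → EuclideanSpace ℝ (Fin d)) :
    ((Submodule.span ℤ (Set.range B) : Submodule ℤ (EuclideanSpace ℝ (Fin d))) : Set (EuclideanSpace ℝ (Fin d)))
      = {x | ∃ c : ι → ℤ, x = ∑ i, (c i : ℝ) • B i} := by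
  ext x
  simp only [SetLike.mem_coe, mem_span_range_iff_exists_fun, Set.mem_setOf_eq]
  constructor
  · rintro ⟨c, rfl⟩; exact ⟨c, by simp [Int.cast_smul_eq_zsmul]⟩
  · rintro ⟨c, rfl⟩; exact ⟨c, by simp [Int.cast_smul_eq_zsmul]⟩

lemma spanR_coe_spanZ {ι : Type*} (B : ι → EuclideanSpace ℝ (Fin d)) :
    Submodule.span ℝ ((Submodule.span ℤ (Set.range B) : Submodule ℤ _) : Set (EuclideanSpace ℝ (Fin d)))
      = Submodule.span ℝ (Set.range B) := by
  apply le_antisymm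
  · rw [Submodule.span_le]
    intro x hx
    exact (Submodule.span_le.mpr (fun y hy => Submodule.subset_span hy) :
      Submodule.span ℤ (Set.range B) ≤ (Submodule.span ℝ (Set.range B)).restrictScalars ℤ) hx
  · exact Submodule.span_mono (fun y hy => Submodule.subset_span hy)

def gram {ι : Type*} [Fintype ι] (B : ι → EuclideanSpace ℝ (Fin d)) : Matrix ι ι ℝ :=
  Matrix.of fun i j => ⟪B i, B j⟫

lemma gram_posDef {ι : Type*} [Fintype ι] [DecidableEq ι] {B : ι → EuclideanSpace ℝ (Fin d)}
    (hB : LinearIndependent ℝ B) : (gram B).PosDef := by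
  rw [Matrix.posDef_iff_dotProduct_mulVec]
  constructor
  · ext i j
    simpa [_root_.gram, Matrix.IsHermitian] using real_inner_comm (B i) (B j)
  · intro x hx
    have hv : (∑ i, x i • B i) ≠ 0 := by
      intro h
      exact hx (funext fun i => Fintype.linearIndependent_iff.mp hB x h i)
    have : dotProduct (star x) ((gram B) *ᵥ x) = ⟪∑ i, x i • B i, ∑ j, x j • B j⟫ := by
      simp [dotProduct, Matrix.mulVec, _root_.gram, sum_inner, inner_sum, real_inner_smul_left,
        real_inner_smul_right, Finset.mul_sum, mul_comm, mul_left_comm]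
      rw [← real_inner_self_eq_norm_sq]
      simp only [sum_inner, inner_sum, real_inner_smul_left, real_inner_smul_right, Finset.mul_sum]
      exact Finset.sum_congr rfl fun i _ => Finset.sum_congr rfl fun j _ => by rw [real_inner_comm]
    rw [this]
    have := real_inner_self_nonpos (F := EuclideanSpace ℝ (Fin d)) (x := ∑ i, x i • B i)
    rcases lt_or_ge 0 (⟪∑ i, x i • B i, ∑ j, x j • B j⟫) with h | h
    · exact h
    · exact absurd (this.mp h) hv

section DualFam
variable {ι : Type*} [Fintype ι] [DecidableEq ι]

/-- The dual family of a linearly independent family. -/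
def dualFam (C : ι → EuclideanSpace ℝ (Fin d)) : ι → EuclideanSpace ℝ (Fin d) :=
  fun i => ∑ j, (gram C)⁻¹ i j • C j

variable {C : ι → EuclideanSpace ℝ (Fin d)}

lemma gram_det_isUnit (hC : LinearIndependent ℝ C) : IsUnit (gram C).det :=
  (gram_posDef hC).det_pos.ne'.isUnit

lemma inner_sum_smul (f : ι → ℝ) (x : EuclideanSpace ℝ (Fin d)) :
    ⟪∑ j, f j • C j, x⟫ = ∑ j, f j * ⟪C j, x⟫ := by
  rw [sum_inner]
  exact Finset.sum_congr rfl fun j _ => real_inner_smul_left _ _ _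

lemma sum_smul_inner (f : ι → ℝ) (x : EuclideanSpace ℝ (Fin d)) :
    ⟪x, ∑ j, f j • C j⟫ = ∑ j, f j * ⟪x, C j⟫ := by
  rw [inner_sum]
  exact Finset.sum_congr rfl fun j _ => real_inner_smul_right _ _ _

lemma dualFam_inner (hC : LinearIndependent ℝ C) (i k : ι) :
    ⟪dualFam C i, C k⟫ = (1 : Matrix ι ι ℝ) i k := by
  have : ⟪dualFam C i, C k⟫ = ((gram C)⁻¹ * gram C) i k := by
    rw [dualFam, inner_sum_smul, Matrix.mul_apply]
    rfl
  rw [this, Matrix.nonsing_inv_mul _ (gram_det_isUnit hC)]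

lemma dualFam_mem_span (i : ι) : dualFam C i ∈ Submodule.span ℝ (Set.range C) :=
  Submodule.sum_mem _ fun j _ => Submodule.smul_mem _ _ (Submodule.subset_span ⟨j, rfl⟩)

lemma dualFam_repr (hC : LinearIndependent ℝ C) {w : EuclideanSpace ℝ (Fin d)}
    (hw : w ∈ Submodule.span ℝ (Set.range C)) :
    w = ∑ j, ⟪w, C j⟫ • dualFam C j := by
  obtain ⟨a, rfl⟩ := (mem_span_range_iff_exists_fun ℝ).mp hw
  have key : ∀ m, (∑ j, ⟪∑ i, a i • C i, C j⟫ * (gram C)⁻¹ j m) = a m := by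
    intro m
    have h1 : ∀ j, ⟪∑ i, a i • C i, C j⟫ = ∑ k, a k * gram C k j := by
      intro j; rw [inner_sum_smul]; rfl
    simp_rw [h1, Finset.sum_mul, mul_assoc]
    rw [Finset.sum_comm]
    have h2 : ∀ k, ∑ j, a k * (gram C k j * (gram C)⁻¹ j m) = a k * (gram C * (gram C)⁻¹) k m := by
      intro k; rw [Matrix.mul_apply, Finset.mul_sum]
    simp_rw [h2, Matrix.mul_nonsing_inv _ (gram_det_isUnit hC)]
    simp [Matrix.one_apply]
  have expand : ∀ j, ⟪∑ i, a i • C i, C j⟫ • dualFam C j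
      = ∑ m, (⟪∑ i, a i • C i, C j⟫ * (gram C)⁻¹ j m) • C m := by
    intro j
    rw [dualFam, Finset.smul_sum]
    exact Finset.sum_congr rfl fun m _ => smul_smul _ _ _
  rw [funext expand, Finset.sum_comm]
  simp_rw [← Finset.sum_smul, key]

lemma gram_dualFam_eq (hC : LinearIndependent ℝ C) : gram (dualFam C) = (gram C)⁻¹ := by
  ext i j
  have h1 : ⟪dualFam C i, dualFam C j⟫ = ∑ m, (gram C)⁻¹ j m * ⟪dualFam C i, C m⟫ :=
    sum_smul_inner ((gram C)⁻¹ j) (dualFam C i)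
  have h2 : ((gram C)⁻¹).IsHermitian := (gram_posDef hC).isHermitian.inv
  show ⟪dualFam C i, dualFam C j⟫ = _
  simp_rw [h1, dualFam_inner hC, Matrix.one_apply]
  simp only [mul_ite, mul_one, mul_zero, Finset.sum_ite_eq, Finset.mem_univ, if_true]
  simpa using h2.apply i j

lemma dualFam_linearIndependent (hC : LinearIndependent ℝ C) :
    LinearIndependent ℝ (dualFam C) := by
  rw [Fintype.linearIndependent_iff]
  intro g hg k
  have h : ⟪∑ i, g i • dualFam C i, C k⟫ = g k := by
    rw [inner_sum_smul]
    simp_rw [dualFam_inner hC, Matrix.one_apply]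
    simp
  rw [hg] at h
  simpa using h.symm

end DualFam

section Transfer
variable {ι κ : Type*} [Fintype ι] [Fintype κ] [DecidableEq ι] [DecidableEq κ]

lemma coeff_unique {B : ι → EuclideanSpace ℝ (Fin d)} (hB : LinearIndependent ℝ B)
    {f g : ι → ℝ} (h : ∑ i, f i • B i = ∑ i, g i • B i) : f = g := by
  have : ∑ i, (f i - g i) • B i = 0 := by
    simp_rw [sub_smul, Finset.sum_sub_distrib, h, sub_self]
  funext i
  have := Fintype.linearIndependent_iff.mp hB _ this i
  linarith

lemma transfer {B : ι → EuclideanSpace ℝ (Fin d)} {C : κ → EuclideanSpace ℝ (Fin d)}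
    (e : κ ≃ ι) (hB : LinearIndependent ℝ B)
    (h : Submodule.span ℤ (Set.range C) = Submodule.span ℤ (Set.range B)) :
    LinearIndependent ℝ C ∧ (gram C).det = (gram B).det := by
  -- C in terms of B
  have hCB : ∀ j, ∃ c : ι → ℤ, C j = ∑ i, (c i : ℝ) • B i := by
    intro j
    have : C j ∈ ((Submodule.span ℤ (Set.range B) : Submodule ℤ _) : Set (EuclideanSpace ℝ (Fin d))) := by
      rw [← h]; exact Submodule.subset_span ⟨j, rfl⟩
    rwa [coe_spanZ] at this
  have hBC : ∀ i, ∃ c : κ → ℤ, B i = ∑ j, (c j : ℝ) • C j := by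
    intro i
    have : B i ∈ ((Submodule.span ℤ (Set.range C) : Submodule ℤ _) : Set (EuclideanSpace ℝ (Fin d))) := by
      rw [h]; exact Submodule.subset_span ⟨i, rfl⟩
    rwa [coe_spanZ] at this
  choose Mz hM using hCB
  choose Nz hN using hBC
  set Mr : Matrix κ ι ℝ := Matrix.of fun j i => (Mz j i : ℝ) with hMr
  set Nr : Matrix ι κ ℝ := Matrix.of fun i j => (Nz i j : ℝ) with hNr
  -- N * M = 1
  have hNM : Nr * Mr = 1 := by
    ext i k
    have expand : B i = ∑ k, (Nr * Mr) i k • B k := by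
      calc B i = ∑ j, (Nz i j : ℝ) • C j := hN i
        _ = ∑ j, (Nz i j : ℝ) • ∑ k, (Mz j k : ℝ) • B k := by simp_rw [← hM]
        _ = ∑ j, ∑ k, ((Nz i j : ℝ) * (Mz j k : ℝ)) • B k := by
              simp_rw [Finset.smul_sum, smul_smul]
        _ = ∑ k, (Nr * Mr) i k • B k := by
              rw [Finset.sum_comm]
              exact Finset.sum_congr rfl fun k _ => by
                rw [Matrix.mul_apply, Finset.sum_smul]; rfl
    have expand2 : B i = ∑ k, (1 : Matrix ι ι ℝ) i k • B k := by
      simp [Matrix.one_apply]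
    exact congrFun (coeff_unique hB (expand.symm.trans expand2)) k
  have hMN : Mr * Nr = 1 := (Matrix.mul_eq_one_comm_of_equiv e.symm).mp hNM
  -- linear independence of C
  have hC : LinearIndependent ℝ C := by
    rw [Fintype.linearIndependent_iff]
    intro g hg j
    have hcoef : ∀ i, ∑ j, g j * Mr j i = 0 := by
      have expand : ∑ j, g j • C j = ∑ i, (∑ j, g j * Mr j i) • B i := by
        calc ∑ j, g j • C j = ∑ j, g j • ∑ i, (Mz j i : ℝ) • B i := by simp_rw [← hM]
          _ = ∑ j, ∑ i, (g j * (Mz j i : ℝ)) • B i := by simp_rw [Finset.smul_sum, smul_smul]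
          _ = ∑ i, (∑ j, g j * Mr j i) • B i := by
                rw [Finset.sum_comm]
                exact Finset.sum_congr rfl fun i _ => by rw [Finset.sum_smul]; rfl
      rw [expand] at hg
      intro i
      have z : ∑ i, (0 : ℝ) • B i = 0 := by simp
      exact congrFun (coeff_unique hB (hg.trans z.symm)) i
    have : (fun j => g j) = fun j => 0 := by
      have step : Matrix.vecMul g (Mr * Nr) = Matrix.vecMul (Matrix.vecMul g Mr) Nr :=
        (Matrix.vecMul_vecMul _ _ _).symm
      rw [hMN, Matrix.vecMul_one] at step
      have : Matrix.vecMul g Mr = 0 := by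
        funext i; exact hcoef i
      rw [this, Matrix.zero_vecMul] at step
      exact funext fun j => congrFun step j
    exact congrFun this j
  refine ⟨hC, ?_⟩
  -- determinant equality
  have form1 : gram C = Matrix.of fun (a b : κ) =>
      ∑ j, ∑ i, (Mz a j : ℝ) * ((Mz b i : ℝ) * ⟪B j, B i⟫) := by
    ext a b
    show ⟪C a, C b⟫ = _
    rw [hM a, hM b, inner_sum_smul]
    exact Finset.sum_congr rfl fun j _ => by rw [sum_smul_inner, Finset.mul_sum]
  set Q : Matrix κ κ ℝ := Matrix.of fun a y => (Mz a (e y) : ℝ) with hQdef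
  set R : Matrix κ κ ℝ := Matrix.of fun y b => (Nz (e y) b : ℝ) with hRdef
  have hQR : Q * R = 1 := by
    ext a b
    have h1 : (Q * R) a b = (Mr * Nr) a b := by
      rw [Matrix.mul_apply, Matrix.mul_apply]
      exact Fintype.sum_equiv e _ _ fun x => rfl
    rw [h1, hMN]
  have hgram : gram C = Q * (gram B).submatrix e e * Qᵀ := by
    rw [form1]
    ext a b
    rw [Matrix.mul_apply]
    have h2 : ∀ x, (Q * (gram B).submatrix e e) a x * Qᵀ x b
        = ∑ y, (Mz a (e y) : ℝ) * ((Mz b (e x) : ℝ) * ⟪B (e y), B (e x)⟫) := by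
      intro x
      rw [Matrix.mul_apply, Finset.sum_mul]
      refine Finset.sum_congr rfl fun y _ => ?_
      show (Mz a (e y) : ℝ) * ⟪B (e y), B (e x)⟫ * (Mz b (e x) : ℝ) = _
      ring
    simp_rw [h2]
    rw [Finset.sum_comm]
    show ∑ j, ∑ i, (Mz a j : ℝ) * ((Mz b i : ℝ) * ⟪B j, B i⟫) = _
    refine (Fintype.sum_equiv e _ _ fun y => ?_).symm
    exact (Fintype.sum_equiv e
      (fun x => (Mz a (e y) : ℝ) * ((Mz b (e x) : ℝ) * ⟪B (e y), B (e x)⟫))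
      (fun i => (Mz a (e y) : ℝ) * ((Mz b i : ℝ) * ⟪B (e y), B i⟫)) (fun x => rfl))
  have hdetQR : Q.det * R.det = 1 := by rw [← Matrix.det_mul, hQR, Matrix.det_one]
  have hQint : Q.det = (((Matrix.of fun a b => Mz a (e b)).det : ℤ) : ℝ) :=
    (RingHom.map_det (Int.castRingHom ℝ) (Matrix.of fun a b => Mz a (e b))).symm
  have hRint : R.det = (((Matrix.of fun a b => Nz (e a) b).det : ℤ) : ℝ) :=
    (RingHom.map_det (Int.castRingHom ℝ) (Matrix.of fun a b => Nz (e a) b)).symm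
  set q : ℤ := (Matrix.of fun a b => Mz a (e b)).det
  set r : ℤ := (Matrix.of fun a b => Nz (e a) b).det
  have hqr : q * r = 1 := by
    have : ((q * r : ℤ) : ℝ) = ((1 : ℤ) : ℝ) := by
      push_cast
      rw [← hQint, ← hRint]; exact hdetQR
    exact_mod_cast this
  have hq2 : Q.det ^ 2 = 1 := by
    rcases Int.isUnit_iff.mp (IsUnit.of_mul_eq_one r hqr) with h1 | h1 <;>
      rw [hQint, h1] <;> norm_num
  rw [hgram, Matrix.det_mul, Matrix.det_mul, Matrix.det_transpose,
    Matrix.det_submatrix_equiv_self]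
  have : Q.det * (gram B).det * Q.det = Q.det ^ 2 * (gram B).det := by ring
  rw [this, hq2, one_mul]

end Transfer

section Adapted
variable {n ℓ : ℕ}

lemma linearIndependent_int {ι : Type*} {B : ι → EuclideanSpace ℝ (Fin d)}
    (hB : LinearIndependent ℝ B) : LinearIndependent ℤ B :=
  hB.restrict_scalars (by intro a b hab; simpa using hab)

lemma exists_adapted_basis (hℓn : ℓ ≤ n) {B : Fin n → EuclideanSpace ℝ (Fin d)}
    {B' : Fin ℓ → EuclideanSpace ℝ (Fin d)}
    (hB : LinearIndependent ℝ B) (hB' : LinearIndependent ℝ B')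
    (hNM : Submodule.span ℤ (Set.range B') ≤ Submodule.span ℤ (Set.range B))
    (hprim : ∀ x : EuclideanSpace ℝ (Fin d), x ∈ Submodule.span ℤ (Set.range B) →
      x ∈ Submodule.span ℝ (Set.range B') → x ∈ Submodule.span ℤ (Set.range B')) :
    ∃ Cs : Fin ℓ ⊕ Fin (n - ℓ) → EuclideanSpace ℝ (Fin d),
      Submodule.span ℤ (Set.range Cs) = Submodule.span ℤ (Set.range B) ∧
      Submodule.span ℤ (Set.range (Cs ∘ Sum.inl)) = Submodule.span ℤ (Set.range B') := by
  classical
  set M : Submodule ℤ (EuclideanSpace ℝ (Fin d)) := Submodule.span ℤ (Set.range B) with hM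
  set N : Submodule ℤ (EuclideanSpace ℝ (Fin d)) := Submodule.span ℤ (Set.range B') with hN
  have bM : Module.Basis (Fin n) ℤ M := Module.Basis.span (linearIndependent_int hB)
  have bN' : Module.Basis (Fin ℓ) ℤ N := Module.Basis.span (linearIndependent_int hB')
  set N₀ : Submodule ℤ M := N.comap M.subtype with hN₀
  obtain ⟨k, o, hko, bO, bN, a, hsnf⟩ :=
    Submodule.exists_smith_normal_form_of_le bM N₀ ⊤ le_top
  -- identify k = ℓ and o = n
  set bT : Module.Basis (Fin o) ℤ M := bO.map (Submodule.topEquiv) with hbT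
  have ho : n = o := by
    simpa using (Fintype.card_congr (bM.indexEquiv bT))
  have bN₀ : Module.Basis (Fin ℓ) ℤ N₀ := bN'.map (Submodule.comapSubtypeEquivOfLe hNM).symm
  have hk : ℓ = k := by
    simpa using (Fintype.card_congr (bN₀.indexEquiv bN))
  subst hk; subst ho
  -- snf in terms of bT
  have hsnf' : ∀ i, ((bN i : M)) = a i • bT (Fin.castLE hko i) := by
    intro i
    rw [hsnf i, hbT]
    rw [Module.Basis.map_apply]
    rfl
  -- each bT (castLE i) lies in N₀
  have hmemN₀ : ∀ i : Fin ℓ, (bT (Fin.castLE hko i) : EuclideanSpace ℝ (Fin d)) ∈ N := by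
    intro i
    have hane : a i ≠ 0 := by
      intro h0
      have h1 : ((bN i : M)) = 0 := by rw [hsnf' i, h0, zero_smul]
      exact Module.Basis.ne_zero bN i (by exact_mod_cast h1)
    have hmem : ((a i • bT (Fin.castLE hko i) : M) : EuclideanSpace ℝ (Fin d)) ∈ N := by
      rw [← hsnf' i]
      exact (bN i).2
    have hsm : (a i : ℝ) • ((bT (Fin.castLE hko i) : M) : EuclideanSpace ℝ (Fin d))
        ∈ Submodule.span ℝ (Set.range B') := by
      have h1 : ((a i • bT (Fin.castLE hko i) : M) : EuclideanSpace ℝ (Fin d))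
          = (a i : ℝ) • ((bT (Fin.castLE hko i) : M) : EuclideanSpace ℝ (Fin d)) := by
        push_cast
        try rw [Int.cast_smul_eq_zsmul]
        try rfl
      rw [← h1]
      have h2 : (N : Set (EuclideanSpace ℝ (Fin d))) ⊆ Submodule.span ℝ (Set.range B') := by
        rw [← spanR_coe_spanZ B']
        exact Submodule.subset_span
      exact h2 hmem
    have hv : ((bT (Fin.castLE hko i) : M) : EuclideanSpace ℝ (Fin d))
        ∈ Submodule.span ℝ (Set.range B') := by
      have := Submodule.smul_mem (Submodule.span ℝ (Set.range B')) ((a i : ℝ))⁻¹ hsm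
      rwa [smul_smul, inv_mul_cancel₀ (by exact_mod_cast hane), one_smul] at this
    exact hprim _ (bT (Fin.castLE hko i)).2 hv
  -- N₀ = span of the castLE part of bT
  have hspanN₀ : N₀ = Submodule.span ℤ (Set.range fun i : Fin ℓ => bT (Fin.castLE hko i)) := by
    apply le_antisymm
    · have h1 : N₀ = Submodule.map N₀.subtype ⊤ := (Submodule.map_subtype_top N₀).symm
      rw [h1, ← bN.span_eq, Submodule.map_span, ← Set.range_comp]
      rw [Submodule.span_le]
      rintro x ⟨j, rfl⟩
      have : (N₀.subtype ∘ bN) j = a j • bT (Fin.castLE hko j) := hsnf' j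
      rw [this]
      exact Submodule.smul_mem _ _ (Submodule.subset_span ⟨j, rfl⟩)
    · rw [Submodule.span_le]
      rintro x ⟨j, rfl⟩
      exact hmemN₀ j
  -- construct Cs
  have h' : ℓ + (n - ℓ) = n := by omega
  set es : (Fin ℓ ⊕ Fin (n - ℓ)) ≃ Fin n := finSumFinEquiv.trans (finCongr h') with hes
  refine ⟨fun s => ((bT (es s) : M) : EuclideanSpace ℝ (Fin d)), ?_, ?_⟩
  · have hrange : Set.range (fun s => ((bT (es s) : M) : EuclideanSpace ℝ (Fin d)))
        = M.subtype '' (Set.range bT) := by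
      ext x
      constructor
      · rintro ⟨s, rfl⟩; exact ⟨bT (es s), ⟨es s, rfl⟩, rfl⟩
      · rintro ⟨y, ⟨i, rfl⟩, rfl⟩; exact ⟨es.symm i, by simp⟩
    rw [hrange, ← Submodule.map_span, bT.span_eq, Submodule.map_subtype_top]
  · have hidx : ∀ i : Fin ℓ, es (Sum.inl i) = Fin.castLE hko i := by
      intro i
      ext
      simp [hes, finSumFinEquiv]
    have hrange : Set.range ((fun s => ((bT (es s) : M) : EuclideanSpace ℝ (Fin d))) ∘ Sum.inl)
        = M.subtype '' (Set.range fun i : Fin ℓ => bT (Fin.castLE hko i)) := by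
      ext x
      constructor
      · rintro ⟨i, rfl⟩
        exact ⟨bT (Fin.castLE hko i), ⟨i, rfl⟩, by simp [hidx i]⟩
      · rintro ⟨y, ⟨i, rfl⟩, rfl⟩
        exact ⟨i, by simp [hidx i]⟩
    rw [hrange, ← Submodule.map_span, ← hspanN₀, hN₀, Submodule.map_comap_subtype,
      inf_eq_right.mpr hNM]

end Adapted

section DualSet2
variable {ι : Type*} [Fintype ι] [DecidableEq ι]

lemma dualSet_eq {C : ι → EuclideanSpace ℝ (Fin d)} (hC : LinearIndependent ℝ C)
    {L : Set (EuclideanSpace ℝ (Fin d))}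
    (hLz : L = ((Submodule.span ℤ (Set.range C) : Submodule ℤ _) : Set (EuclideanSpace ℝ (Fin d)))) :
    dualSet L = ((Submodule.span ℤ (Set.range (dualFam C)) : Submodule ℤ _) :
      Set (EuclideanSpace ℝ (Fin d))) := by
  have hspan : Submodule.span ℝ L = Submodule.span ℝ (Set.range C) := by
    rw [hLz, spanR_coe_spanZ]
  ext w
  constructor
  · rintro ⟨hw1, hw2⟩
    rw [hspan] at hw1
    have hCmem : ∀ j, C j ∈ L := by
      intro j; rw [hLz]; exact Submodule.subset_span ⟨j, rfl⟩
    choose m hm using fun j => hw2 (C j) (hCmem j)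
    rw [coe_spanZ]
    refine ⟨m, ?_⟩
    have := dualFam_repr hC hw1
    rw [this]
    exact Finset.sum_congr rfl fun j _ => by rw [hm j]
  · intro hw
    rw [coe_spanZ] at hw
    obtain ⟨c, rfl⟩ := hw
    constructor
    · rw [hspan]
      exact Submodule.sum_mem _ fun j _ => Submodule.smul_mem _ _ (dualFam_mem_span j)
    · intro y hy
      rw [hLz, coe_spanZ] at hy
      obtain ⟨b, rfl⟩ := hy
      refine ⟨∑ j, c j * b j, ?_⟩
      rw [inner_sum_smul]
      push_cast
      refine Finset.sum_congr rfl fun j _ => ?_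
      rw [sum_smul_inner]
      simp_rw [dualFam_inner hC, Matrix.one_apply]
      simp [Finset.mul_sum, mul_comm]

end DualSet2

section BlockDet
variable {κ₁ κ₂ : Type*} [Fintype κ₁] [Fintype κ₂] [DecidableEq κ₁] [DecidableEq κ₂]

lemma det_dual_block {C : κ₁ ⊕ κ₂ → EuclideanSpace ℝ (Fin d)} (hC : LinearIndependent ℝ C) :
    (gram (dualFam C ∘ Sum.inr)).det * (gram C).det = (gram (C ∘ Sum.inl)).det := by
  classical
  set G := gram C with hG
  set H := gram (dualFam C) with hH
  have hGH : G * H = 1 := by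
    rw [hH, gram_dualFam_eq hC, hG, Matrix.mul_nonsing_inv _ (gram_det_isUnit hC)]
  set A := G.toBlocks₁₁ with hA
  set Bm := G.toBlocks₁₂ with hBm
  set Cm := G.toBlocks₂₁ with hCm
  set Dm := G.toBlocks₂₂ with hDm
  set X := H.toBlocks₁₂ with hX
  set Z := H.toBlocks₂₂ with hZ
  have hGblocks : G = Matrix.fromBlocks A Bm Cm Dm := (Matrix.fromBlocks_toBlocks G).symm
  have hHblocks : H = Matrix.fromBlocks H.toBlocks₁₁ X H.toBlocks₂₁ Z :=
    (Matrix.fromBlocks_toBlocks H).symm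
  have hmul : Matrix.fromBlocks (A * H.toBlocks₁₁ + Bm * H.toBlocks₂₁) (A * X + Bm * Z)
      (Cm * H.toBlocks₁₁ + Dm * H.toBlocks₂₁) (Cm * X + Dm * Z)
      = Matrix.fromBlocks 1 0 0 1 := by
    rw [← Matrix.fromBlocks_multiply, ← hGblocks, ← hHblocks, hGH, Matrix.fromBlocks_one]
  have e12 : A * X + Bm * Z = 0 := by
    have := congrArg Matrix.toBlocks₁₂ hmul
    simpa only [Matrix.toBlocks_fromBlocks₁₂] using this
  have e22 : Cm * X + Dm * Z = 1 := by
    have := congrArg Matrix.toBlocks₂₂ hmul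
    simpa only [Matrix.toBlocks_fromBlocks₂₂] using this
  -- A is invertible
  have hAlin : LinearIndependent ℝ (C ∘ Sum.inl) := hC.comp Sum.inl Sum.inl_injective
  have hAeq : A = gram (C ∘ Sum.inl) := rfl
  have hZeq : Z = gram (dualFam C ∘ Sum.inr) := rfl
  have hAunit : IsUnit A.det := by rw [hAeq]; exact gram_det_isUnit hAlin
  have : Invertible A := A.invertibleOfIsUnitDet hAunit
  have hXeq : X = -(⅟A * (Bm * Z)) := by
    have h1 : A * X = -(Bm * Z) := by
      have := e12
      rw [add_eq_zero_iff_eq_neg] at this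
      exact this
    calc X = ⅟A * (A * X) := by rw [← Matrix.mul_assoc, invOf_mul_self, Matrix.one_mul]
      _ = ⅟A * -(Bm * Z) := by rw [h1]
      _ = -(⅟A * (Bm * Z)) := by rw [Matrix.mul_neg]
  have hschur : (Dm - Cm * ⅟A * Bm) * Z = 1 := by
    have h2 : Cm * X = -(Cm * ⅟A * Bm * Z) := by
      rw [hXeq, Matrix.mul_neg, Matrix.mul_assoc (Cm * ⅟A), Matrix.mul_assoc Cm]
    rw [Matrix.sub_mul]
    rw [← e22, h2]
    abel
  have hdet1 : (Dm - Cm * ⅟A * Bm).det * Z.det = 1 := by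
    rw [← Matrix.det_mul, hschur, Matrix.det_one]
  have hdetG : G.det = A.det * (Dm - Cm * ⅟A * Bm).det := by
    rw [hGblocks]; exact Matrix.det_fromBlocks₁₁ A Bm Cm Dm
  rw [← hZeq, ← hAeq, hdetG]
  calc Z.det * (A.det * (Dm - Cm * ⅟A * Bm).det)
      = A.det * ((Dm - Cm * ⅟A * Bm).det * Z.det) := by ring
    _ = A.det := by rw [hdet1, mul_one]

end BlockDet

lemma zspan_coe {n : ℕ} (B : Fin n → EuclideanSpace ℝ (Fin d)) :
    zspan B = ((Submodule.span ℤ (Set.range B) : Submodule ℤ _) : Set (EuclideanSpace ℝ (Fin d))) :=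
  (coe_spanZ B).symm


end Stmt3Aux

theorem stmt3 {d n ℓ : ℕ} (L L' L'' : Set (EuclideanSpace ℝ (Fin d)))
    (hL : IsLattice L n) (hL' : IsLattice L' ℓ) (hsub : L' ⊆ L)
    (hprim : L' = L ∩ (Submodule.span ℝ L' : Set (EuclideanSpace ℝ (Fin d))))
    (hL''def : L'' = dualSet L ∩ ((Submodule.span ℝ L')ᗮ : Set (EuclideanSpace ℝ (Fin d)))) :
    (L'' ⊆ dualSet L ∧ L'' = dualSet L ∩ (Submodule.span ℝ L'' : Set (EuclideanSpace ℝ (Fin d)))) ∧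
    L ∩ ((Submodule.span ℝ L'')ᗮ : Set (EuclideanSpace ℝ (Fin d))) = L' ∧
    (∀ (B : Fin n → EuclideanSpace ℝ (Fin d)) (B' : Fin ℓ → EuclideanSpace ℝ (Fin d))
        (D : Fin n → EuclideanSpace ℝ (Fin d)) (B'' : Fin (n - ℓ) → EuclideanSpace ℝ (Fin d)),
      LinearIndependent ℝ B → L = zspan B →
      LinearIndependent ℝ B' → L' = zspan B' →
      LinearIndependent ℝ D → dualSet L = zspan D →
      LinearIndependent ℝ B'' → L'' = zspan B'' →
      gramDet B'' / gramDet D ^ (((n : ℝ) - (ℓ : ℝ)) / (n : ℝ)) =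
        gramDet B' / gramDet B ^ ((ℓ : ℝ) / (n : ℝ))) := by
  classical
  obtain ⟨B₀, hB₀, hLz0⟩ := hL
  obtain ⟨B₀', hB₀', hL'z0⟩ := hL'
  have hLset : L = ((Submodule.span ℤ (Set.range B₀) : Submodule ℤ _) : Set _) := by
    rw [hLz0, zspan_coe]
  have hL'set : L' = ((Submodule.span ℤ (Set.range B₀') : Submodule ℤ _) : Set _) := by
    rw [hL'z0, zspan_coe]
  have hsub' : Submodule.span ℤ (Set.range B₀') ≤ Submodule.span ℤ (Set.range B₀) := by
    rw [← SetLike.coe_subset_coe, ← hLset, ← hL'set]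
    exact hsub
  have hspanRsub : Submodule.span ℝ (Set.range B₀') ≤ Submodule.span ℝ (Set.range B₀) := by
    rw [← spanR_coe_spanZ B₀', ← spanR_coe_spanZ B₀, ← hLset, ← hL'set]
    exact Submodule.span_mono hsub
  have hℓn : ℓ ≤ n := by
    have h1 := finrank_span_eq_card hB₀'
    have h2 := finrank_span_eq_card hB₀
    have h3 := Submodule.finrank_mono hspanRsub
    rw [h1, h2] at h3
    simpa using h3
  have hspanL'B : Submodule.span ℝ L' = Submodule.span ℝ (Set.range B₀') := by
    rw [hL'set, spanR_coe_spanZ]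
  have hprim' : ∀ x : EuclideanSpace ℝ (Fin d), x ∈ Submodule.span ℤ (Set.range B₀) →
      x ∈ Submodule.span ℝ (Set.range B₀') → x ∈ Submodule.span ℤ (Set.range B₀') := by
    intro x hx1 hx2
    have hx : x ∈ L' := by
      rw [hprim]
      refine ⟨by rw [hLset]; exact hx1, ?_⟩
      rw [SetLike.mem_coe, hspanL'B]
      exact hx2
    rwa [hL'set] at hx
  obtain ⟨Cs, hCsM, hCsN⟩ := exists_adapted_basis hℓn hB₀ hB₀' hsub' hprim'
  have hcard : ℓ + (n - ℓ) = n := by omega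
  set esum : (Fin ℓ ⊕ Fin (n - ℓ)) ≃ Fin n := finSumFinEquiv.trans (finCongr hcard) with hesum
  obtain ⟨hCslin, hCsdet⟩ := transfer esum hB₀ hCsM
  have hCs1lin : LinearIndependent ℝ (Cs ∘ Sum.inl) := hCslin.comp Sum.inl Sum.inl_injective
  have hLz2 : L = ((Submodule.span ℤ (Set.range Cs) : Submodule ℤ _) : Set _) := by
    rw [hLset, hCsM]
  have hL'z2 : L' = ((Submodule.span ℤ (Set.range (Cs ∘ Sum.inl)) : Submodule ℤ _) : Set _) := by
    rw [hL'set, hCsN]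
  have hspanL'2 : Submodule.span ℝ L' = Submodule.span ℝ (Set.range (Cs ∘ Sum.inl)) := by
    rw [hL'z2, spanR_coe_spanZ]
  set Ds := dualFam Cs with hDs
  have hdual : dualSet L = ((Submodule.span ℤ (Set.range Ds) : Submodule ℤ _) : Set _) :=
    dualSet_eq hCslin hLz2
  have hDslin : LinearIndependent ℝ Ds := dualFam_linearIndependent hCslin
  -- characterization of L''
  have hL''eq : L'' = ((Submodule.span ℤ (Set.range (Ds ∘ Sum.inr)) : Submodule ℤ _) : Set _) := by
    rw [hL''def]
    ext w
    constructor
    · rintro ⟨hw1, hw2⟩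
      rw [hdual, coe_spanZ] at hw1
      obtain ⟨c, rfl⟩ := hw1
      have hcinl : ∀ i : Fin ℓ, c (Sum.inl i) = 0 := by
        intro i
        have hCsmem : Cs (Sum.inl i) ∈ Submodule.span ℝ L' := by
          rw [hspanL'2]
          exact Submodule.subset_span ⟨i, rfl⟩
        have h0 : ⟪Cs (Sum.inl i), ∑ k, (c k : ℝ) • Ds k⟫ = 0 :=
          (Submodule.mem_orthogonal _ _).mp (SetLike.mem_coe.mp hw2) _ hCsmem
        have h1 : ⟪∑ k, (c k : ℝ) • Ds k, Cs (Sum.inl i)⟫ = (c (Sum.inl i) : ℝ) := by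
          rw [inner_sum_smul]
          simp_rw [hDs, dualFam_inner hCslin, Matrix.one_apply]
          simp
        rw [real_inner_comm, h1] at h0
        exact_mod_cast h0
      rw [coe_spanZ]
      refine ⟨fun j => c (Sum.inr j), ?_⟩
      rw [Fintype.sum_sum_type]
      simp [hcinl]
    · intro hw
      rw [coe_spanZ] at hw
      obtain ⟨m, rfl⟩ := hw
      constructor
      · rw [hdual]
        have hle : Submodule.span ℤ (Set.range (Ds ∘ Sum.inr)) ≤ Submodule.span ℤ (Set.range Ds) :=
          Submodule.span_mono (Set.range_comp_subset_range Sum.inr Ds)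
        have : (∑ j, (m j : ℝ) • (Ds ∘ Sum.inr) j) ∈ Submodule.span ℤ (Set.range (Ds ∘ Sum.inr)) := by
          rw [← SetLike.mem_coe, coe_spanZ]
          exact ⟨m, rfl⟩
        exact hle this
      · rw [SetLike.mem_coe, Submodule.mem_orthogonal]
        intro u hu
        rw [hspanL'2] at hu
        obtain ⟨a, rfl⟩ := (mem_span_range_iff_exists_fun ℝ).mp hu
        rw [inner_sum_smul]
        apply Finset.sum_eq_zero
        intro i _
        have hz : ⟪∑ j, (m j : ℝ) • (Ds ∘ Sum.inr) j, (Cs ∘ Sum.inl) i⟫ = 0 := by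
          rw [inner_sum_smul]
          apply Finset.sum_eq_zero
          intro j _
          have h4 : ⟪(Ds ∘ Sum.inr) j, (Cs ∘ Sum.inl) i⟫
              = (1 : Matrix _ _ ℝ) (Sum.inr j) (Sum.inl i) :=
            dualFam_inner hCslin (Sum.inr j) (Sum.inl i)
          rw [h4, Matrix.one_apply_ne (by simp)]
          ring
        rw [real_inner_comm, hz, mul_zero]
  refine ⟨⟨?_, ?_⟩, ?_, ?_⟩
  · rw [hL''def]; exact Set.inter_subset_left
  · apply Set.Subset.antisymm
    · intro x hx
      exact ⟨(hL''def ▸ hx).1, Submodule.subset_span hx⟩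
    · rintro x ⟨hx1, hx2⟩
      rw [hL''def]
      refine ⟨hx1, ?_⟩
      have hle : Submodule.span ℝ L'' ≤ (Submodule.span ℝ L')ᗮ := by
        rw [Submodule.span_le]
        rw [hL''def]
        exact Set.inter_subset_right
      exact hle hx2
  -- part 2
  · ext x
    constructor
    · rintro ⟨hxL, hxperp⟩
      rw [hLz2, coe_spanZ] at hxL
      obtain ⟨c, rfl⟩ := hxL
      have hcinr : ∀ j : Fin (n - ℓ), c (Sum.inr j) = 0 := by
        intro j
        have hDmem : Ds (Sum.inr j) ∈ Submodule.span ℝ L'' := by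
          apply Submodule.subset_span
          rw [hL''eq]
          exact Submodule.subset_span ⟨j, rfl⟩
        have h0 : ⟪Ds (Sum.inr j), ∑ k, (c k : ℝ) • Cs k⟫ = 0 :=
          (Submodule.mem_orthogonal _ _).mp (SetLike.mem_coe.mp hxperp) _ hDmem
        have h1 : ⟪Ds (Sum.inr j), ∑ k, (c k : ℝ) • Cs k⟫ = (c (Sum.inr j) : ℝ) := by
          rw [sum_smul_inner]
          simp_rw [hDs, dualFam_inner hCslin, Matrix.one_apply]
          simp
        rw [h1] at h0
        exact_mod_cast h0
      rw [hL'z2, coe_spanZ]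
      refine ⟨fun i => c (Sum.inl i), ?_⟩
      rw [Fintype.sum_sum_type]
      simp [hcinr]
    · intro hx
      refine ⟨hsub hx, ?_⟩
      rw [SetLike.mem_coe, Submodule.mem_orthogonal]
      intro u hu
      have hle : Submodule.span ℝ L'' ≤ (Submodule.span ℝ L')ᗮ := by
        rw [Submodule.span_le, hL''def]
        exact Set.inter_subset_right
      have hu' : u ∈ (Submodule.span ℝ L')ᗮ := hle hu
      have hx' : x ∈ Submodule.span ℝ L' := Submodule.subset_span hx
      exact (Submodule.mem_orthogonal' _ _).mp hu' x hx'
  -- part 3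
  · intro B B' D B'' hB hLB hB' hL'B' hD hdualD hB'' hL''B''
    by_cases hn : n = 0
    · have hl0 : ℓ = 0 := by omega
      subst hn; subst hl0
      haveI : IsEmpty (Fin (0 - 0)) := inferInstanceAs (IsEmpty (Fin 0))
      have e1 : gramDet B'' = 1 := by rw [gramDet, Matrix.det_isEmpty, Real.sqrt_one]
      have e2 : gramDet B' = 1 := by rw [gramDet, Matrix.det_isEmpty, Real.sqrt_one]
      have e3 : gramDet B = 1 := by rw [gramDet, Matrix.det_isEmpty, Real.sqrt_one]
      have e4 : gramDet D = 1 := by rw [gramDet, Matrix.det_isEmpty, Real.sqrt_one]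
      rw [e1, e2, e3, e4, Real.one_rpow, Real.one_rpow]
    · have hnR : (n : ℝ) ≠ 0 := by exact_mod_cast hn
      have hdetB : (gram B).det = (gram Cs).det :=
        (transfer esum.symm hCslin (by
          apply SetLike.coe_injective
          rw [← zspan_coe, ← hLB, hLz2])).2
      have hdetB' : (gram B').det = (gram (Cs ∘ Sum.inl)).det :=
        (transfer (Equiv.refl (Fin ℓ)) hCs1lin (by
          apply SetLike.coe_injective
          rw [← zspan_coe, ← hL'B', hL'z2])).2
      have hdetD : (gram D).det = (gram Ds).det :=
        (transfer esum.symm hDslin (by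
          apply SetLike.coe_injective
          rw [← zspan_coe, ← hdualD, hdual])).2
      have hDs2lin : LinearIndependent ℝ (Ds ∘ Sum.inr) := hDslin.comp Sum.inr Sum.inr_injective
      have hdetB'' : (gram B'').det = (gram (Ds ∘ Sum.inr)).det :=
        (transfer (Equiv.refl (Fin (n - ℓ))) hDs2lin (by
          apply SetLike.coe_injective
          rw [← zspan_coe, ← hL''B'', hL''eq])).2
      have key := det_dual_block hCslin
      set g : ℝ := (gram Cs).det with hg
      set g' : ℝ := (gram (Cs ∘ Sum.inl)).det with hg'
      have hgpos : 0 < g := (gram_posDef hCslin).det_pos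
      have hg'pos : 0 < g' := (gram_posDef hCs1lin).det_pos
      have hDsdet : (gram Ds).det = g⁻¹ := by
        have hmul1 : (gram Ds).det * g = 1 := by
          rw [hDs, gram_dualFam_eq hCslin, hg, ← Matrix.det_mul,
            Matrix.nonsing_inv_mul _ (gram_det_isUnit hCslin), Matrix.det_one]
        field_simp at hmul1 ⊢
        linarith [hmul1]
      have hDs2det : (gram (Ds ∘ Sum.inr)).det = g' / g := by
        rw [eq_div_iff (ne_of_gt hgpos)]
        exact key
      have hgd : ∀ {m : ℕ} (X : Fin m → EuclideanSpace ℝ (Fin d)),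
          gramDet X = Real.sqrt ((gram X).det) := fun X => rfl
      rw [hgd B'', hgd B', hgd B, hgd D, hdetB'', hdetB', hdetB, hdetD, hDs2det, hDsdet]
      set a : ℝ := Real.sqrt g with ha'
      set b : ℝ := Real.sqrt g' with hb'
      have ha : 0 < a := Real.sqrt_pos.mpr hgpos
      have hb : 0 < b := Real.sqrt_pos.mpr hg'pos
      have hsd : Real.sqrt (g' / g) = b / a := by
        rw [ha', hb', ← Real.sqrt_div (le_of_lt hg'pos)]
      have hsi : Real.sqrt g⁻¹ = a⁻¹ := by rw [ha', ← Real.sqrt_inv]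
      rw [hsd, hsi]
      rw [Real.inv_rpow (le_of_lt ha)]
      rw [div_eq_mul_inv _ (_)⁻¹, inv_inv]
      have hzw : ((n : ℝ) - (ℓ : ℝ)) / (n : ℝ) + (ℓ : ℝ) / (n : ℝ) = 1 := by
        field_simp
        ring
      have key2 : a ^ (((n : ℝ) - (ℓ : ℝ)) / (n : ℝ)) * a ^ ((ℓ : ℝ) / (n : ℝ)) = a := by
        rw [← Real.rpow_add ha, hzw, Real.rpow_one]
      rw [div_mul_eq_mul_div, div_eq_div_iff (ne_of_gt ha)
        (ne_of_gt (Real.rpow_pos_of_pos ha ((ℓ : ℝ) / (n : ℝ))))]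
      rw [mul_assoc, key2]
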